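/- Let U and V be k-dimensional linear subspaces of ℝ^d and α ∈ [0, π/2) such that every unit vector u ∈ U satisfies dist(u, V) ≤ sin α (i.e., the angle between U and V is at most α). Let f be the orthogonal projection of ℝ^d onto V, restricted to U. Then (1) f : U → V is bijective, and (2) for every r > 0, the image f(U ∩ B(0, r)) contains V ∩ B(0, r·cos α), where B(0, r) is the closed ball of radius r. -/

import Mathlib

noncomputable section

set_option maxHeartbeats 1000000 in
/-- If `U` and `V` are `k`-dimensional subspaces of `ℝ^d` making an angle at most
`α < π/2` (every unit vector of `U` is within distance `sin α` of `V`), then the orthogonal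
projection onto `V`, restricted to `U`, is a bijection from `U` to `V`, and the image of
`U ∩ B(0,r)` contains `V ∩ B(0, r cos α)`. -/
theorem projection_between_close_subspaces
    (d k : ℕ) (U V : Submodule ℝ (EuclideanSpace ℝ (Fin d)))
    (hU : Module.finrank ℝ U = k) (hV : Module.finrank ℝ V = k)
    (α : ℝ) (hα0 : 0 ≤ α) (hα1 : α < Real.pi / 2)
    (hangle : ∀ u ∈ U, ‖u‖ = 1 →
      Metric.infDist u (V : Set (EuclideanSpace ℝ (Fin d))) ≤ Real.sin α) :
    Function.Bijective
      (fun u : U => V.orthogonalProjection (u : EuclideanSpace ℝ (Fin d))) ∧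
    ∀ r : ℝ, 0 < r →
      (V : Set (EuclideanSpace ℝ (Fin d))) ∩ Metric.closedBall 0 (r * Real.cos α) ⊆
        (fun u : EuclideanSpace ℝ (Fin d) =>
            (V.orthogonalProjection u : EuclideanSpace ℝ (Fin d))) ''
          ((U : Set (EuclideanSpace ℝ (Fin d))) ∩ Metric.closedBall 0 r) := by
  have hcos : 0 < Real.cos α := Real.cos_pos_of_mem_Ioo ⟨by linarith [Real.pi_pos], hα1⟩
  -- infDist equals norm of difference bound
  have hproj_le : ∀ u : EuclideanSpace ℝ (Fin d),
      ‖u - (V.orthogonalProjection u : EuclideanSpace ℝ (Fin d))‖ ≤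
        Metric.infDist u (V : Set (EuclideanSpace ℝ (Fin d))) := by
    intro u
    rw [← Submodule.starProjection_apply, Submodule.starProjection_minimal, Metric.infDist_eq_iInf]
    apply le_ciInf
    intro y
    rw [dist_eq_norm]
    exact ciInf_le ⟨0, fun b ⟨x, hx⟩ => hx ▸ norm_nonneg _⟩ (⟨y.1, y.2⟩ : V)
  -- scaled angle bound
  have hkey : ∀ u ∈ U,
      ‖u - (V.orthogonalProjection u : EuclideanSpace ℝ (Fin d))‖ ≤ Real.sin α * ‖u‖ := by
    intro u hu
    rcases eq_or_ne u 0 with rfl | hne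
    · simp
    · have hnorm : ‖u‖ ≠ 0 := norm_ne_zero_iff.mpr hne
      have h1 : ‖(‖u‖⁻¹ • u)‖ = 1 := by
        rw [norm_smul, norm_inv, norm_norm, inv_mul_cancel₀ hnorm]
      have h2 := (hproj_le (‖u‖⁻¹ • u)).trans
        (hangle _ (U.smul_mem _ hu) h1)
      rw [map_smul] at h2
      have h3 : ‖(‖u‖⁻¹ • u) - ((‖u‖⁻¹ • V.orthogonalProjection u : V) :
          EuclideanSpace ℝ (Fin d))‖
          = ‖u‖⁻¹ * ‖u - (V.orthogonalProjection u : EuclideanSpace ℝ (Fin d))‖ := by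
        rw [Submodule.coe_smul, ← smul_sub, norm_smul, norm_inv, norm_norm]
      rw [h3] at h2
      have hpos : 0 < ‖u‖ := lt_of_le_of_ne (norm_nonneg _) (Ne.symm hnorm)
      calc ‖u - (V.orthogonalProjection u : EuclideanSpace ℝ (Fin d))‖
          = ‖u‖ * (‖u‖⁻¹ * ‖u - (V.orthogonalProjection u : EuclideanSpace ℝ (Fin d))‖) := by
            field_simp
        _ ≤ ‖u‖ * Real.sin α := by
            exact mul_le_mul_of_nonneg_left h2 (norm_nonneg _)
        _ = Real.sin α * ‖u‖ := mul_comm _ _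
  -- lower bound on projection norm
  have hlow : ∀ u ∈ U, Real.cos α * ‖u‖ ≤
      ‖(V.orthogonalProjection u : EuclideanSpace ℝ (Fin d))‖ := by
    intro u hu
    have hpyth : ‖u‖ ^ 2 =
        ‖(V.orthogonalProjection u : EuclideanSpace ℝ (Fin d))‖ ^ 2 +
        ‖u - (V.orthogonalProjection u : EuclideanSpace ℝ (Fin d))‖ ^ 2 := by
      have h := Submodule.norm_sq_eq_add_norm_sq_projection u V
      rw [Submodule.orthogonalProjectionOnto_orthogonal u] at h
      simpa using h
    have hsin := hkey u hu
    have hsin0 : 0 ≤ Real.sin α := Real.sin_nonneg_of_nonneg_of_le_pi hα0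
      (by linarith [Real.pi_pos])
    have hsq : (Real.cos α * ‖u‖) ^ 2 ≤
        ‖(V.orthogonalProjection u : EuclideanSpace ℝ (Fin d))‖ ^ 2 := by
      have h2 : ‖u - (V.orthogonalProjection u : EuclideanSpace ℝ (Fin d))‖ ^ 2 ≤
          (Real.sin α * ‖u‖) ^ 2 := by
        apply sq_le_sq' _ hsin
        nlinarith [norm_nonneg (u - (V.orthogonalProjection u : EuclideanSpace ℝ (Fin d)))]
      have := Real.sin_sq_add_cos_sq α
      nlinarith [norm_nonneg u]
    exact (abs_le_of_sq_le_sq' hsq (norm_nonneg _)).2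
  -- the linear map
  set f : U →ₗ[ℝ] V := (V.orthogonalProjection).toLinearMap.comp (U.subtype) with hf
  have hinj : Function.Injective f := by
    rw [← LinearMap.ker_eq_bot, Submodule.eq_bot_iff]
    rintro ⟨u, hu⟩ hker
    have : (f ⟨u, hu⟩ : EuclideanSpace ℝ (Fin d)) = 0 := by
      rw [hker]; rfl
    have hl := hlow u hu
    rw [show (V.orthogonalProjection u : EuclideanSpace ℝ (Fin d)) = 0 from this,
      norm_zero] at hl
    have hz : ‖u‖ = 0 := by nlinarith [norm_nonneg u]
    have : u = 0 := norm_eq_zero.mp hz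
    exact Subtype.ext this
  have hfin : Function.Bijective f :=
    ⟨hinj, (LinearMap.injective_iff_surjective_of_finrank_eq_finrank
      (by rw [hU, hV])).mp hinj⟩
  refine ⟨hfin, ?_⟩
  intro r hr
  rintro v ⟨hvV, hvball⟩
  obtain ⟨u, hu⟩ := hfin.2 ⟨v, hvV⟩
  refine ⟨u, ⟨u.2, ?_⟩, ?_⟩
  · rw [Metric.mem_closedBall, dist_zero_right]
    have h1 := hlow u u.2
    have h2 : (f u : EuclideanSpace ℝ (Fin d)) = v := by rw [hu]
    have h3 : ‖(V.orthogonalProjection (u : EuclideanSpace ℝ (Fin d)) :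
        EuclideanSpace ℝ (Fin d))‖ = ‖v‖ := by
      rw [← h2]; rfl
    rw [h3] at h1
    rw [Metric.mem_closedBall, dist_zero_right] at hvball
    have := h1.trans hvball
    nlinarith [norm_nonneg (u : EuclideanSpace ℝ (Fin d))]
  · have h2 : (f u : EuclideanSpace ℝ (Fin d)) = v := by rw [hu]
    exact h2
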